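/- Every nonnegative integer n can be written as T_x + T_y + 2T_z for nonnegative integers x, y, z. -/

import Mathlib

/-- The `n`-th triangular number. -/
def T (n : ℕ) : ℕ := n * (n + 1) / 2

/-- Binary quadratic form value. -/
def Qb (a b c x y : ℤ) : ℤ := a*x^2 + 2*b*x*y + c*y^2

/-- Ternary quadratic form value (classically integral). -/
def Qt (a b c d e f x y z : ℤ) : ℤ :=
  a*x^2 + b*y^2 + c*z^2 + 2*d*x*y + 2*e*x*z + 2*f*y*z

/-- Determinant of the ternary form with matrix [[a,d,e],[d,b,f],[e,f,c]]. -/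
def Dt (a b c d e f : ℤ) : ℤ := a*b*c + 2*d*e*f - a*f^2 - b*e^2 - c*d^2

/-- Nearest-multiple lemma: can shift `B` by a multiple of `m` into `[-m/2, m/2]`. -/
lemma near (B m : ℤ) (hm : 1 ≤ m) : ∃ k : ℤ, 2 * |B + k * m| ≤ m := by
  rcases le_or_gt (2 * (B % m)) m with h | h
  · refine ⟨-(B / m), ?_⟩
    have h0 : B + -(B / m) * m = B % m := by
      have := Int.mul_ediv_add_emod B m; linarith
    rw [h0, abs_of_nonneg (Int.emod_nonneg B (by omega))]; omega
  · refine ⟨-(B / m) - 1, ?_⟩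
    have h0 : B + (-(B / m) - 1) * m = B % m - m := by
      have := Int.mul_ediv_add_emod B m; linarith
    have h1 : B % m < m := Int.emod_lt_of_pos B (by omega)
    rw [h0, abs_of_nonpos (by omega)]; omega

/-- Multiplicative-type identity for binary forms under a substitution. -/
lemma bQmul (a b c p q r s : ℤ) :
    (Qb a b c p r) * (Qb a b c q s) - (a*p*q + b*(p*s + q*r) + c*r*s)^2
      = (p*s - q*r)^2 * (a*c - b^2) := by
  unfold Qb; ring

/-- Existence of a minimum for a positive binary form. -/
lemma bmin (a b c : ℤ) (hpos : ∀ x y : ℤ, ¬(x = 0 ∧ y = 0) → 1 ≤ Qb a b c x y) :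
    ∃ x y M : ℤ, ¬(x = 0 ∧ y = 0) ∧ Qb a b c x y = M ∧ 1 ≤ M ∧
      ∀ u v : ℤ, ¬(u = 0 ∧ v = 0) → M ≤ Qb a b c u v := by
  have ha1 : 1 ≤ Qb a b c 1 0 := hpos 1 0 (by simp)
  set S : Set ℕ := {k | ∃ x y : ℤ, ¬(x = 0 ∧ y = 0) ∧ Qb a b c x y = (k : ℤ)} with hS
  have hne : S.Nonempty := ⟨(Qb a b c 1 0).toNat, 1, 0, by simp, by omega⟩
  obtain ⟨x, y, hxy, hQ⟩ := Nat.sInf_mem hne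
  refine ⟨x, y, ((sInf S : ℕ) : ℤ), hxy, hQ, ?_, ?_⟩
  · have := hpos x y hxy; omega
  · intro u v huv
    have h1 : 1 ≤ Qb a b c u v := hpos u v huv
    have h2 : (Qb a b c u v).toNat ∈ S := ⟨u, v, huv, by omega⟩
    have := Nat.sInf_le h2
    omega

/-- Expansion of a binary form under substitution. -/
lemma bTrans (a b c t₁ t₂ t₃ t₄ U V : ℤ) :
    Qb a b c (t₁*U + t₂*V) (t₃*U + t₄*V)
      = (Qb a b c t₁ t₃)*U^2 + 2*(a*t₁*t₂ + b*(t₁*t₄ + t₂*t₃) + c*t₃*t₄)*U*V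
        + (Qb a b c t₂ t₄)*V^2 := by
  unfold Qb; ring

/-- Reduction chain for positive binary forms. -/
lemma breduce (a b c : ℤ) (hpos : ∀ x y : ℤ, ¬(x = 0 ∧ y = 0) → 1 ≤ Qb a b c x y) :
    ∃ t₁ t₂ t₃ t₄ M B C : ℤ,
      t₁*t₄ - t₂*t₃ = 1 ∧
      Qb a b c t₁ t₃ = M ∧
      a*t₁*t₂ + b*(t₁*t₄ + t₂*t₃) + c*t₃*t₄ = B ∧
      Qb a b c t₂ t₄ = C ∧
      1 ≤ M ∧ 2*|B| ≤ M ∧ M ≤ C ∧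
      (∀ u v : ℤ, ¬(u = 0 ∧ v = 0) → M ≤ Qb a b c u v) ∧
      M*C - B^2 = a*c - b^2 := by
  obtain ⟨x, y, M, hxy, hQ, hM1, hmin⟩ := bmin a b c hpos
  have hgcd : Int.gcd x y = 1 := by
    have hg0 : Int.gcd x y ≠ 0 := by
      intro h
      exact hxy ⟨(Int.gcd_eq_zero_iff.mp h).1, (Int.gcd_eq_zero_iff.mp h).2⟩
    obtain ⟨x₁, hx₁⟩ : ((Int.gcd x y : ℤ)) ∣ x := Int.gcd_dvd_left _ _
    obtain ⟨y₁, hy₁⟩ : ((Int.gcd x y : ℤ)) ∣ y := Int.gcd_dvd_right _ _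
    have hgz : 1 ≤ (Int.gcd x y : ℤ) := by exact_mod_cast Nat.one_le_iff_ne_zero.mpr hg0
    obtain ⟨G, hG⟩ : ∃ G : ℤ, G = (Int.gcd x y : ℤ) := ⟨_, rfl⟩
    rw [← hG] at hx₁ hy₁ hgz
    have hxy₁ : ¬(x₁ = 0 ∧ y₁ = 0) := by
      rintro ⟨h1, h2⟩
      exact hxy ⟨by rw [hx₁, h1, mul_zero], by rw [hy₁, h2, mul_zero]⟩
    have hM : G^2 * Qb a b c x₁ y₁ = M := by
      rw [← hQ, hx₁, hy₁]; unfold Qb; ring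
    have h1 : M ≤ Qb a b c x₁ y₁ := hmin _ _ hxy₁
    have h2 : 1 ≤ Qb a b c x₁ y₁ := hpos _ _ hxy₁
    have hgle : G ≤ 1 := by
      by_contra hgt
      push_neg at hgt
      have h4 : 4 ≤ G^2 := by nlinarith
      nlinarith [hM, h1, h2, h4]
    have hG1 : G = 1 := le_antisymm hgle hgz
    rw [hG1] at hG
    exact_mod_cast hG.symm
  obtain ⟨α, β, hbez⟩ : ∃ α β : ℤ, 1 = x * α + y * β := by
    refine ⟨Int.gcdA x y, Int.gcdB x y, ?_⟩
    have := Int.gcd_eq_gcd_ab x y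
    rw [hgcd] at this; exact_mod_cast this
  obtain ⟨k, hk⟩ := near (a*x*(-β) + b*(x*α + (-β)*y) + c*y*α) M hM1
  have hdet2 : x*(y*k + α) - (x*k + -β)*y = 1 := by linear_combination -hbez
  have hQ' : a*x^2 + 2*b*x*y + c*y^2 = M := hQ
  have hcross : a*x*(x*k + -β) + b*(x*(y*k + α) + (x*k + -β)*y) + c*y*(y*k + α)
      = a*x*(-β) + b*(x*α + (-β)*y) + c*y*α + k*M := by linear_combination k * hQ'
  have hC : M ≤ Qb a b c (x*k + -β) (y*k + α) := by
    apply hmin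
    rintro ⟨h1, h2⟩
    have h3 : (1 : ℤ) = 0 := by linear_combination hbez + x*h2 - y*h1
    exact one_ne_zero h3
  have hdp : M * Qb a b c (x*k + -β) (y*k + α)
      - (a*x*(-β) + b*(x*α + (-β)*y) + c*y*α + k*M)^2 = a*c - b^2 := by
    have h5 := bQmul a b c x (x*k + -β) y (y*k + α)
    rw [hdet2, hQ, hcross] at h5
    linarith [h5]
  exact ⟨x, x*k + -β, y, y*k + α, M, a*x*(-β) + b*(x*α + (-β)*y) + c*y*α + k*M,
    Qb a b c (x*k + -β) (y*k + α), by linear_combination -hbez, hQ, hcross, rfl,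
    hM1, hk, hC, hmin, hdp⟩

/-- Minimum of a positive binary form satisfies the Hermite-type bound. -/
lemma binary_min (a b c : ℤ) (hpos : ∀ x y : ℤ, ¬(x = 0 ∧ y = 0) → 1 ≤ Qb a b c x y) :
    ∃ u v M : ℤ, ¬(u = 0 ∧ v = 0) ∧ Qb a b c u v = M ∧ 1 ≤ M ∧
      (∀ x y : ℤ, ¬(x = 0 ∧ y = 0) → M ≤ Qb a b c x y) ∧ 3*M^2 ≤ 4*(a*c - b^2) := by
  obtain ⟨t₁, t₂, t₃, t₄, M, B, C, hdet, hE1, hE2, hE3, hM1, hB, hC, hmin, hdp⟩ :=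
    breduce a b c hpos
  have ht : ¬(t₁ = 0 ∧ t₃ = 0) := by
    rintro ⟨h1, h2⟩
    rw [h1, h2] at hdet; simp at hdet
  have h4B : 4*B^2 ≤ M^2 := by nlinarith [sq_abs B, abs_nonneg B, hB, hM1]
  exact ⟨t₁, t₃, M, ht, hE1, hM1, hmin, by nlinarith [hdp, hC, h4B, hM1]⟩

/-- A positive binary form of determinant 1 is a sum of squares of two linear forms. -/
lemma binary_split (a b c : ℤ) (hpos : ∀ x y : ℤ, ¬(x = 0 ∧ y = 0) → 1 ≤ Qb a b c x y)
    (hD : a*c - b^2 = 1) :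
    ∃ p q r s : ℤ, ∀ y z : ℤ, Qb a b c y z = (p*y + q*z)^2 + (r*y + s*z)^2 := by
  obtain ⟨t₁, t₂, t₃, t₄, M, B, C, hdet, hE1, hE2, hE3, hM1, hB, hC, hmin, hdp⟩ :=
    breduce a b c hpos
  rw [hD] at hdp
  have h4B : 4*B^2 ≤ M^2 := by nlinarith [sq_abs B, abs_nonneg B, hB, hM1]
  have hMle : M ≤ 1 := by nlinarith [hdp, hC, h4B, hM1]
  have hM : M = 1 := le_antisymm hMle hM1
  rw [hM] at hB hdp hE1 hC
  have hB0 : B = 0 := by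
    have := abs_nonneg B
    have : |B| = 0 := by omega
    exact abs_eq_zero.mp this
  rw [hB0] at hdp hE2
  have hC1 : C = 1 := by linarith [hdp]
  rw [hC1] at hE3
  refine ⟨t₄, -t₂, -t₃, t₁, ?_⟩
  intro y z
  have h1 := bTrans a b c t₁ t₂ t₃ t₄ (t₄*y - t₂*z) (-t₃*y + t₁*z)
  rw [hE1, hE2, hE3] at h1
  have h2 : t₁*(t₄*y - t₂*z) + t₂*(-t₃*y + t₁*z) = y := by linear_combination y*hdet
  have h3 : t₃*(t₄*y - t₂*z) + t₄*(-t₃*y + t₁*z) = z := by linear_combination z*hdet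
  rw [h2, h3] at h1
  linear_combination h1

/-- Polar bilinear form of `Qt`. -/
def Bt (a b c d e f x y z x' y' z' : ℤ) : ℤ :=
  a*x*x' + b*y*y' + c*z*z' + d*(x*y' + x'*y) + e*(x*z' + x'*z) + f*(y*z' + y'*z)

/-- 3×3 determinant, entries listed by rows; columns are (p,q,r). -/
def det3 (p₁ q₁ r₁ p₂ q₂ r₂ p₃ q₃ r₃ : ℤ) : ℤ :=
  p₁*(q₂*r₃ - q₃*r₂) - q₁*(p₂*r₃ - p₃*r₂) + r₁*(p₂*q₃ - p₃*q₂)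

lemma tTrans (a b c d e f p₁ p₂ p₃ q₁ q₂ q₃ r₁ r₂ r₃ X Y Z : ℤ) :
    Qt a b c d e f (p₁*X + q₁*Y + r₁*Z) (p₂*X + q₂*Y + r₂*Z) (p₃*X + q₃*Y + r₃*Z)
      = (Qt a b c d e f p₁ p₂ p₃)*X^2 + (Qt a b c d e f q₁ q₂ q₃)*Y^2
        + (Qt a b c d e f r₁ r₂ r₃)*Z^2
        + 2*(Bt a b c d e f p₁ p₂ p₃ q₁ q₂ q₃)*X*Y
        + 2*(Bt a b c d e f p₁ p₂ p₃ r₁ r₂ r₃)*X*Z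
        + 2*(Bt a b c d e f q₁ q₂ q₃ r₁ r₂ r₃)*Y*Z := by
  unfold Qt Bt; ring

lemma tDet (a b c d e f p₁ p₂ p₃ q₁ q₂ q₃ r₁ r₂ r₃ : ℤ) :
    Dt (Qt a b c d e f p₁ p₂ p₃) (Qt a b c d e f q₁ q₂ q₃) (Qt a b c d e f r₁ r₂ r₃)
       (Bt a b c d e f p₁ p₂ p₃ q₁ q₂ q₃) (Bt a b c d e f p₁ p₂ p₃ r₁ r₂ r₃)
       (Bt a b c d e f q₁ q₂ q₃ r₁ r₂ r₃)
      = (det3 p₁ q₁ r₁ p₂ q₂ r₂ p₃ q₃ r₃)^2 * Dt a b c d e f := by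
  unfold Dt Qt Bt det3; ring

/-- Cramer-type identities. -/
lemma cramer1 (p₁ q₁ r₁ p₂ q₂ r₂ p₃ q₃ r₃ w₁ w₂ w₃ : ℤ) :
    (q₂*r₃ - q₃*r₂)*(p₁*w₁ + q₁*w₂ + r₁*w₃) - (q₁*r₃ - q₃*r₁)*(p₂*w₁ + q₂*w₂ + r₂*w₃)
      + (q₁*r₂ - q₂*r₁)*(p₃*w₁ + q₃*w₂ + r₃*w₃)
      = det3 p₁ q₁ r₁ p₂ q₂ r₂ p₃ q₃ r₃ * w₁ := by
  unfold det3; ring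

lemma cramer2 (p₁ q₁ r₁ p₂ q₂ r₂ p₃ q₃ r₃ w₁ w₂ w₃ : ℤ) :
    -(p₂*r₃ - p₃*r₂)*(p₁*w₁ + q₁*w₂ + r₁*w₃) + (p₁*r₃ - p₃*r₁)*(p₂*w₁ + q₂*w₂ + r₂*w₃)
      - (p₁*r₂ - p₂*r₁)*(p₃*w₁ + q₃*w₂ + r₃*w₃)
      = det3 p₁ q₁ r₁ p₂ q₂ r₂ p₃ q₃ r₃ * w₂ := by
  unfold det3; ring

lemma cramer3 (p₁ q₁ r₁ p₂ q₂ r₂ p₃ q₃ r₃ w₁ w₂ w₃ : ℤ) :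
    (p₂*q₃ - p₃*q₂)*(p₁*w₁ + q₁*w₂ + r₁*w₃) - (p₁*q₃ - p₃*q₁)*(p₂*w₁ + q₂*w₂ + r₂*w₃)
      + (p₁*q₂ - p₂*q₁)*(p₃*w₁ + q₃*w₂ + r₃*w₃)
      = det3 p₁ q₁ r₁ p₂ q₂ r₂ p₃ q₃ r₃ * w₃ := by
  unfold det3; ring

/-- Existence of a minimum for a positive ternary form. -/
lemma tmin (a b c d e f : ℤ)
    (hpos : ∀ x y z : ℤ, ¬(x = 0 ∧ y = 0 ∧ z = 0) → 1 ≤ Qt a b c d e f x y z) :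
    ∃ x y z M : ℤ, ¬(x = 0 ∧ y = 0 ∧ z = 0) ∧ Qt a b c d e f x y z = M ∧ 1 ≤ M ∧
      ∀ u v w : ℤ, ¬(u = 0 ∧ v = 0 ∧ w = 0) → M ≤ Qt a b c d e f u v w := by
  have ha1 : 1 ≤ Qt a b c d e f 1 0 0 := hpos 1 0 0 (by simp)
  set S : Set ℕ := {k | ∃ x y z : ℤ, ¬(x = 0 ∧ y = 0 ∧ z = 0) ∧ Qt a b c d e f x y z = (k : ℤ)}
    with hS
  have hne : S.Nonempty := ⟨(Qt a b c d e f 1 0 0).toNat, 1, 0, 0, by simp, by omega⟩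
  obtain ⟨x, y, z, hxyz, hQ⟩ := Nat.sInf_mem hne
  refine ⟨x, y, z, ((sInf S : ℕ) : ℤ), hxyz, hQ, ?_, ?_⟩
  · have := hpos x y z hxyz; omega
  · intro u v w huvw
    have h1 : 1 ≤ Qt a b c d e f u v w := hpos u v w huvw
    have h2 : (Qt a b c d e f u v w).toNat ∈ S := ⟨u, v, w, huvw, by omega⟩
    have := Nat.sInf_le h2
    omega

/-- A primitive vector in ℤ³ is the first column of a matrix of determinant 1. -/
lemma extend3 (x y z : ℤ) (h : Int.gcd ((Int.gcd x y : ℤ)) z = 1) :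
    ∃ q₁ q₂ q₃ r₁ r₂ r₃ : ℤ, det3 x q₁ r₁ y q₂ r₂ z q₃ r₃ = 1 := by
  rcases eq_or_ne (Int.gcd x y) 0 with hg0 | hg0
  · have hx0 : x = 0 := (Int.gcd_eq_zero_iff.mp hg0).1
    have hy0 : y = 0 := (Int.gcd_eq_zero_iff.mp hg0).2
    rw [hg0] at h
    have hz : z = 1 ∨ z = -1 := by
      have h1 : z.natAbs = 1 := by simpa [Int.gcd] using h
      rcases Int.natAbs_eq z with h2 | h2 <;> omega
    refine ⟨1, 0, 0, 0, z, 0, ?_⟩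
    subst hx0 hy0
    unfold det3
    rcases hz with h1 | h1 <;> rw [h1] <;> ring
  · have hgz : ((Int.gcd x y : ℤ)) ≠ 0 := by exact_mod_cast hg0
    obtain ⟨x₁, hx₁⟩ : ((Int.gcd x y : ℤ)) ∣ x := Int.gcd_dvd_left _ _
    obtain ⟨y₁, hy₁⟩ : ((Int.gcd x y : ℤ)) ∣ y := Int.gcd_dvd_right _ _
    obtain ⟨α, β, hb1⟩ : ∃ α β : ℤ, (Int.gcd x y : ℤ) = x * α + y * β :=
      ⟨_, _, Int.gcd_eq_gcd_ab x y⟩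
    obtain ⟨γ, δ, hb2⟩ : ∃ γ δ : ℤ, (1 : ℤ) = (Int.gcd x y : ℤ) * γ + z * δ := by
      refine ⟨Int.gcdA ((Int.gcd x y : ℤ)) z, Int.gcdB ((Int.gcd x y : ℤ)) z, ?_⟩
      have := Int.gcd_eq_gcd_ab ((Int.gcd x y : ℤ)) z
      rw [h] at this; exact_mod_cast this
    obtain ⟨G, hG⟩ : ∃ G : ℤ, G = (Int.gcd x y : ℤ) := ⟨_, rfl⟩
    rw [← hG] at hx₁ hy₁ hgz hb1 hb2
    have hE1 : x₁ * α + y₁ * β = 1 := by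
      have h2 : G * (x₁ * α + y₁ * β) = G * 1 := by
        linear_combination -hb1 - α*hx₁ - β*hy₁
      exact mul_left_cancel₀ hgz h2
    refine ⟨-β, α, 0, -δ*x₁, -δ*y₁, γ, ?_⟩
    unfold det3
    linear_combination -γ*hb1 + z*δ*hE1 - hb2

set_option maxHeartbeats 1000000 in
/-- A positive ternary form of determinant 1 represents its leading coefficient
as a sum of three squares. -/
theorem ternary_rep (a b c d e f : ℤ) (hD : Dt a b c d e f = 1)
    (hpos : ∀ x y z : ℤ, ¬(x = 0 ∧ y = 0 ∧ z = 0) → 1 ≤ Qt a b c d e f x y z) :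
    ∃ r s t : ℤ, a = r^2 + s^2 + t^2 := by
  obtain ⟨x, y, z, M, hxyz, hQ, hM1, hmin⟩ := tmin a b c d e f hpos
  -- the minimum is attained at a primitive vector
  have hgcd : Int.gcd ((Int.gcd x y : ℤ)) z = 1 := by
    have hg0 : Int.gcd ((Int.gcd x y : ℤ)) z ≠ 0 := by
      intro h0
      have h1 := Int.gcd_eq_zero_iff.mp h0
      have h2 : Int.gcd x y = 0 := by exact_mod_cast h1.1
      exact hxyz ⟨(Int.gcd_eq_zero_iff.mp h2).1, (Int.gcd_eq_zero_iff.mp h2).2, h1.2⟩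
    obtain ⟨x₁, hx₁⟩ : ((Int.gcd ((Int.gcd x y : ℤ)) z : ℤ)) ∣ x :=
      dvd_trans (Int.gcd_dvd_left _ _) (Int.gcd_dvd_left _ _)
    obtain ⟨y₁, hy₁⟩ : ((Int.gcd ((Int.gcd x y : ℤ)) z : ℤ)) ∣ y :=
      dvd_trans (Int.gcd_dvd_left _ _) (Int.gcd_dvd_right _ _)
    obtain ⟨z₁, hz₁⟩ : ((Int.gcd ((Int.gcd x y : ℤ)) z : ℤ)) ∣ z := Int.gcd_dvd_right _ _
    have hgz : 1 ≤ ((Int.gcd ((Int.gcd x y : ℤ)) z : ℤ)) := by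
      exact_mod_cast Nat.one_le_iff_ne_zero.mpr hg0
    obtain ⟨G, hG⟩ : ∃ G : ℤ, G = ((Int.gcd ((Int.gcd x y : ℤ)) z : ℤ)) := ⟨_, rfl⟩
    rw [← hG] at hx₁ hy₁ hz₁ hgz
    have hxyz₁ : ¬(x₁ = 0 ∧ y₁ = 0 ∧ z₁ = 0) := by
      rintro ⟨h1, h2, h3⟩
      exact hxyz ⟨by rw [hx₁, h1, mul_zero], by rw [hy₁, h2, mul_zero],
        by rw [hz₁, h3, mul_zero]⟩
    have hM : G^2 * Qt a b c d e f x₁ y₁ z₁ = M := by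
      rw [← hQ, hx₁, hy₁, hz₁]; unfold Qt; ring
    have h1 : M ≤ Qt a b c d e f x₁ y₁ z₁ := hmin _ _ _ hxyz₁
    have h2 : 1 ≤ Qt a b c d e f x₁ y₁ z₁ := hpos _ _ _ hxyz₁
    have hgle : G ≤ 1 := by
      by_contra hgt
      push_neg at hgt
      have h4 : 4 ≤ G^2 := by nlinarith
      nlinarith [hM, h1, h2, h4]
    have hG1 : G = 1 := le_antisymm hgle hgz
    rw [hG1] at hG
    exact_mod_cast hG.symm
  obtain ⟨q₁, q₂, q₃, r₁, r₂, r₃, hdet⟩ := extend3 x y z hgcd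
  obtain ⟨k₁, hk₁⟩ := near (Bt a b c d e f x y z q₁ q₂ q₃) M hM1
  obtain ⟨k₂, hk₂⟩ := near (Bt a b c d e f x y z r₁ r₂ r₃) M hM1
  have hdetT : det3 x (q₁+k₁*x) (r₁+k₂*x) y (q₂+k₁*y) (r₂+k₂*y) z (q₃+k₁*z) (r₃+k₂*z) = 1 := by
    unfold det3 at hdet ⊢; linear_combination hdet
  have hD2eq : Bt a b c d e f x y z (q₁+k₁*x) (q₂+k₁*y) (q₃+k₁*z)
      = Bt a b c d e f x y z q₁ q₂ q₃ + k₁ * M := by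
    rw [← hQ]; unfold Qt Bt; ring
  have hE2eq : Bt a b c d e f x y z (r₁+k₂*x) (r₂+k₂*y) (r₃+k₂*z)
      = Bt a b c d e f x y z r₁ r₂ r₃ + k₂ * M := by
    rw [← hQ]; unfold Qt Bt; ring
  have hDt2 := tDet a b c d e f x y z (q₁+k₁*x) (q₂+k₁*y) (q₃+k₁*z)
    (r₁+k₂*x) (r₂+k₂*y) (r₃+k₂*z)
  rw [hdetT, hD, hQ] at hDt2
  obtain ⟨B2, hB2⟩ : ∃ t, Qt a b c d e f (q₁+k₁*x) (q₂+k₁*y) (q₃+k₁*z) = t := ⟨_, rfl⟩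
  obtain ⟨C2, hC2⟩ : ∃ t, Qt a b c d e f (r₁+k₂*x) (r₂+k₂*y) (r₃+k₂*z) = t := ⟨_, rfl⟩
  obtain ⟨D2, hD2'⟩ : ∃ t, Bt a b c d e f x y z (q₁+k₁*x) (q₂+k₁*y) (q₃+k₁*z) = t := ⟨_, rfl⟩
  obtain ⟨E2, hE2'⟩ : ∃ t, Bt a b c d e f x y z (r₁+k₂*x) (r₂+k₂*y) (r₃+k₂*z) = t := ⟨_, rfl⟩
  obtain ⟨F2, hF2⟩ : ∃ t, Bt a b c d e f (q₁+k₁*x) (q₂+k₁*y) (q₃+k₁*z)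
      (r₁+k₂*x) (r₂+k₂*y) (r₃+k₂*z) = t := ⟨_, rfl⟩
  rw [hB2, hC2, hD2', hE2', hF2] at hDt2
  rw [hD2'] at hD2eq
  rw [hE2'] at hE2eq
  have hDt2' : Dt M B2 C2 D2 E2 F2 = 1 := by rw [hDt2]; ring
  have hk₁' : 2*|D2| ≤ M := by rw [hD2eq]; exact hk₁
  have hk₂' : 2*|E2| ≤ M := by rw [hE2eq]; exact hk₂
  have keyQ : ∀ X Y Z : ℤ, Qt M B2 C2 D2 E2 F2 X Y Z
      = Qt a b c d e f (x*X + (q₁+k₁*x)*Y + (r₁+k₂*x)*Z)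
          (y*X + (q₂+k₁*y)*Y + (r₂+k₂*y)*Z) (z*X + (q₃+k₁*z)*Y + (r₃+k₂*z)*Z) := by
    intro X Y Z
    rw [tTrans, hQ, hB2, hC2, hD2', hE2', hF2]
    unfold Qt; ring
  have hmin2 : ∀ X Y Z : ℤ, ¬(X = 0 ∧ Y = 0 ∧ Z = 0) → M ≤ Qt M B2 C2 D2 E2 F2 X Y Z := by
    intro X Y Z hXYZ
    rw [keyQ]
    apply hmin
    rintro ⟨h1, h2, h3⟩
    have c1 := cramer1 x (q₁+k₁*x) (r₁+k₂*x) y (q₂+k₁*y) (r₂+k₂*y) z (q₃+k₁*z) (r₃+k₂*z) X Y Z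
    have c2 := cramer2 x (q₁+k₁*x) (r₁+k₂*x) y (q₂+k₁*y) (r₂+k₂*y) z (q₃+k₁*z) (r₃+k₂*z) X Y Z
    have c3 := cramer3 x (q₁+k₁*x) (r₁+k₂*x) y (q₂+k₁*y) (r₂+k₂*y) z (q₃+k₁*z) (r₃+k₂*z) X Y Z
    rw [h1, h2, h3, hdetT] at c1 c2 c3
    simp only [mul_zero, sub_zero, add_zero, zero_sub, zero_add, one_mul, neg_zero] at c1 c2 c3
    exact hXYZ ⟨by linarith [c1], by linarith [c2], by linarith [c3]⟩
  have KI : ∀ X Y Z : ℤ, M * Qt M B2 C2 D2 E2 F2 X Y Z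
      = (M*X + D2*Y + E2*Z)^2 + Qb (M*B2 - D2^2) (M*F2 - D2*E2) (M*C2 - E2^2) Y Z := by
    intro X Y Z; unfold Qt Qb; ring
  have hbinpos : ∀ Y Z : ℤ, ¬(Y = 0 ∧ Z = 0) →
      3*M^2 ≤ 4 * Qb (M*B2 - D2^2) (M*F2 - D2*E2) (M*C2 - E2^2) Y Z := by
    intro Y Z hYZ
    obtain ⟨k, hk⟩ := near (D2*Y + E2*Z) M hM1
    have h1 : M ≤ Qt M B2 C2 D2 E2 F2 k Y Z :=
      hmin2 k Y Z (by rintro ⟨_, h2, h3⟩; exact hYZ ⟨h2, h3⟩)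
    have h2 := KI k Y Z
    have h3 : 4*(D2*Y + E2*Z + k*M)^2 ≤ M^2 := by
      nlinarith [sq_abs (D2*Y + E2*Z + k*M), abs_nonneg (D2*Y + E2*Z + k*M), hk, hM1]
    have h4 := mul_le_mul_of_nonneg_left h1 (by linarith : (0:ℤ) ≤ M)
    linarith [h2, h3, h4]
  have hbinpos1 : ∀ Y Z : ℤ, ¬(Y = 0 ∧ Z = 0) →
      1 ≤ Qb (M*B2 - D2^2) (M*F2 - D2*E2) (M*C2 - E2^2) Y Z := by
    intro Y Z hYZ
    have := hbinpos Y Z hYZ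
    nlinarith [hM1]
  obtain ⟨u, v, M₂, huv, hQuv, hM₂1, hmin₂, hbound⟩ := binary_min _ _ _ hbinpos1
  have hDb : (M*B2 - D2^2)*(M*C2 - E2^2) - (M*F2 - D2*E2)^2 = M * Dt M B2 C2 D2 E2 F2 := by
    unfold Dt; ring
  rw [hDb, hDt2', mul_one] at hbound
  have hlower : 3*M^2 ≤ 4*M₂ := by
    have := hbinpos u v huv
    rw [hQuv] at this
    exact this
  have hMeq : M = 1 := by
    by_contra hne
    have hM2 : 2 ≤ M := by omega
    have e1 : 2*M ≤ M^2 := by nlinarith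
    have e2 : 2*M^2 ≤ M^3 := by nlinarith
    have e3 : 2*M^3 ≤ M^4 := by nlinarith
    have e4 : 9*M^4 ≤ 16*M₂^2 := by nlinarith [hlower, hM1, hM₂1]
    have e5 : 27*M^4 ≤ 64*M := by nlinarith [e4, hbound]
    linarith
  have hD20 : D2 = 0 := by
    rw [hMeq] at hk₁'
    have h0 : |D2| = 0 := by have := abs_nonneg D2; omega
    exact abs_eq_zero.mp h0
  have hE20 : E2 = 0 := by
    rw [hMeq] at hk₂'
    have h0 : |E2| = 0 := by have := abs_nonneg E2; omega
    exact abs_eq_zero.mp h0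
  have hg : B2*C2 - F2^2 = 1 := by
    have h5 := hDt2'
    rw [hMeq, hD20, hE20] at h5
    unfold Dt at h5
    linarith [h5]
  have hgpos : ∀ Y Z : ℤ, ¬(Y = 0 ∧ Z = 0) → 1 ≤ Qb B2 F2 C2 Y Z := by
    intro Y Z hYZ
    have h1 : M ≤ Qt M B2 C2 D2 E2 F2 0 Y Z :=
      hmin2 0 Y Z (by rintro ⟨_, h2, h3⟩; exact hYZ ⟨h2, h3⟩)
    rw [hMeq, hD20, hE20] at h1
    have h2 : Qt 1 B2 C2 0 0 F2 0 Y Z = Qb B2 F2 C2 Y Z := by unfold Qt Qb; ring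
    rw [h2] at h1
    exact h1
  obtain ⟨p, q, r, s, hsplit⟩ := binary_split B2 F2 C2 hgpos hg
  -- adjugate column
  have hTw1 : x*((q₂+k₁*y)*(r₃+k₂*z) - (r₂+k₂*y)*(q₃+k₁*z))
      + (q₁+k₁*x)*(-(y*(r₃+k₂*z) - (r₂+k₂*y)*z))
      + (r₁+k₂*x)*(y*(q₃+k₁*z) - (q₂+k₁*y)*z) = 1 := by
    unfold det3 at hdetT; linear_combination hdetT
  have hTw2 : y*((q₂+k₁*y)*(r₃+k₂*z) - (r₂+k₂*y)*(q₃+k₁*z))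
      + (q₂+k₁*y)*(-(y*(r₃+k₂*z) - (r₂+k₂*y)*z))
      + (r₂+k₂*y)*(y*(q₃+k₁*z) - (q₂+k₁*y)*z) = 0 := by ring
  have hTw3 : z*((q₂+k₁*y)*(r₃+k₂*z) - (r₂+k₂*y)*(q₃+k₁*z))
      + (q₃+k₁*z)*(-(y*(r₃+k₂*z) - (r₂+k₂*y)*z))
      + (r₃+k₂*z)*(y*(q₃+k₁*z) - (q₂+k₁*y)*z) = 0 := by ring
  have h1 := keyQ ((q₂+k₁*y)*(r₃+k₂*z) - (r₂+k₂*y)*(q₃+k₁*z))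
    (-(y*(r₃+k₂*z) - (r₂+k₂*y)*z)) (y*(q₃+k₁*z) - (q₂+k₁*y)*z)
  rw [hTw1, hTw2, hTw3] at h1
  have h2 : Qt a b c d e f 1 0 0 = a := by unfold Qt; ring
  rw [h2, hMeq, hD20, hE20] at h1
  have h3 : Qt 1 B2 C2 0 0 F2 ((q₂+k₁*y)*(r₃+k₂*z) - (r₂+k₂*y)*(q₃+k₁*z))
        (-(y*(r₃+k₂*z) - (r₂+k₂*y)*z)) (y*(q₃+k₁*z) - (q₂+k₁*y)*z)
      = ((q₂+k₁*y)*(r₃+k₂*z) - (r₂+k₂*y)*(q₃+k₁*z))^2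
        + Qb B2 F2 C2 (-(y*(r₃+k₂*z) - (r₂+k₂*y)*z)) (y*(q₃+k₁*z) - (q₂+k₁*y)*z) := by
    unfold Qt Qb; ring
  rw [h3, hsplit] at h1
  refine ⟨(q₂+k₁*y)*(r₃+k₂*z) - (r₂+k₂*y)*(q₃+k₁*z),
    p * -(y*(r₃+k₂*z) - (r₂+k₂*y)*z) + q * (y*(q₃+k₁*z) - (q₂+k₁*y)*z),
    r * -(y*(r₃+k₂*z) - (r₂+k₂*y)*z) + s * (y*(q₃+k₁*z) - (q₂+k₁*y)*z), ?_⟩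
  linarith [h1]


lemma sqz {t : ℤ} (h : t^2 ≤ 0) : t = 0 :=
  pow_eq_zero_iff two_ne_zero |>.mp (le_antisymm h (sq_nonneg t))

/-- Given a suitable auxiliary prime, `2*m` is a sum of three squares. -/
lemma construct (m p : ℕ) (hm1 : 1 ≤ m) (hp : p.Prime)
    (hdvd : (2*m) ∣ (p+1)) (hsq : IsSquare (((-(2*(m:ℤ)) : ℤ)) : ZMod p)) :
    ∃ u v w : ℤ, (2*(m:ℤ)) = u^2 + v^2 + w^2 := by
  haveI : Fact p.Prime := ⟨hp⟩
  have hp2 : (2:ℤ) ≤ (p:ℤ) := by exact_mod_cast hp.two_le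
  have hm1' : (1:ℤ) ≤ (m:ℤ) := by exact_mod_cast hm1
  obtain ⟨D, hND⟩ : ∃ D : ℤ, ((p:ℤ) + 1) = (2*(m:ℤ)) * D := by
    obtain ⟨D₀, hD₀⟩ := hdvd
    refine ⟨(D₀ : ℤ), ?_⟩
    have h1 : ((p+1 : ℕ) : ℤ) = ((2*m*D₀ : ℕ) : ℤ) := by rw [hD₀]
    push_cast at h1
    linarith
  have hone : (((2*(m:ℤ)) : ℤ) : ZMod p) * ((D : ZMod p)) = 1 := by
    have h1 : (((2*(m:ℤ)) : ℤ) : ZMod p) * ((D : ZMod p)) = (((p:ℤ) + 1 : ℤ) : ZMod p) := by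
      rw [← Int.cast_mul, ← hND]
    have h2 : (((p:ℤ) + 1 : ℤ) : ZMod p) = 1 := by
      push_cast
      simp
    rw [h2] at h1
    exact h1
  obtain ⟨r, hr⟩ := hsq
  have hrD : (r * ((D : ℤ) : ZMod p)) * (r * ((D : ℤ) : ZMod p)) = -((D : ℤ) : ZMod p) := by
    calc (r * ((D : ℤ) : ZMod p)) * (r * ((D : ℤ) : ZMod p))
        = (r * r) * (((D : ℤ) : ZMod p) * ((D : ℤ) : ZMod p)) := by ring
      _ = (-(((2*(m:ℤ)) : ℤ) : ZMod p)) * (((D : ℤ) : ZMod p) * ((D : ℤ) : ZMod p)) := by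
          rw [← hr]; push_cast; ring
      _ = -(((((2*(m:ℤ)) : ℤ) : ZMod p) * ((D : ℤ) : ZMod p)) * ((D : ℤ) : ZMod p)) := by ring
      _ = -((D : ℤ) : ZMod p) := by rw [hone]; ring
  obtain ⟨b, hbS⟩ : ∃ b : ℤ, ((b : ℤ) : ZMod p) = r * ((D : ℤ) : ZMod p) :=
    ⟨((r * ((D : ℤ) : ZMod p)).val : ℤ), by push_cast [ZMod.natCast_val, ZMod.cast_id]; rfl⟩
  obtain ⟨γ, hγ⟩ : ∃ γ : ℤ, b^2 + D = (p:ℤ) * γ := by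
    have h1 : ((b^2 + D : ℤ) : ZMod p) = 0 := by
      push_cast
      rw [hbS]
      linear_combination hrD
    exact (ZMod.intCast_zmod_eq_zero_iff_dvd _ _).mp h1
  have hDt : Dt (2*(m:ℤ)) (p:ℤ) γ 0 1 b = 1 := by
    unfold Dt; linear_combination (-(2*(m:ℤ)))*hγ - hND
  have key : ∀ x y z : ℤ, (2*(m:ℤ))*(p:ℤ)*(Qt (2*(m:ℤ)) (p:ℤ) γ 0 1 b x y z)
      = (p:ℤ)*((2*(m:ℤ))*x + z)^2 + (2*(m:ℤ))*((p:ℤ)*y + b*z)^2 + z^2 := by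
    intro x y z; unfold Qt; linear_combination ((-(2*(m:ℤ)))*hγ - hND)*z^2
  have hpos : ∀ x y z : ℤ, ¬(x = 0 ∧ y = 0 ∧ z = 0) → 1 ≤ Qt (2*(m:ℤ)) (p:ℤ) γ 0 1 b x y z := by
    intro x y z hxyz
    by_contra hcon
    push_neg at hcon
    have h0 : Qt (2*(m:ℤ)) (p:ℤ) γ 0 1 b x y z ≤ 0 := by linarith
    have hk := key x y z
    have t1 : 0 ≤ (p:ℤ)*((2*(m:ℤ))*x + z)^2 := by positivity
    have t2 : 0 ≤ (2*(m:ℤ))*((p:ℤ)*y + b*z)^2 := by positivity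
    have t3 : (0:ℤ) ≤ z^2 := sq_nonneg z
    have hsum : (p:ℤ)*((2*(m:ℤ))*x + z)^2 + (2*(m:ℤ))*((p:ℤ)*y + b*z)^2 + z^2 ≤ 0 := by
      rw [← hk]
      have hfac := mul_le_mul_of_nonneg_left h0
        (show (0:ℤ) ≤ 2*(m:ℤ)*(p:ℤ) by positivity)
      linarith [hfac]
    have hz : z = 0 := sqz (by linarith)
    subst hz
    have hy' : ((p:ℤ)*y + b*0) = 0 := by
      apply sqz
      nlinarith [t1, hsum, hm1']
    have hy : y = 0 := by
      have : (p:ℤ) * y = 0 := by linarith [hy']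
      rcases mul_eq_zero.mp this with h | h
      · linarith
      · exact h
    have hx' : ((2*(m:ℤ))*x + 0) = 0 := by
      apply sqz
      nlinarith [t2, hsum, hp2]
    have hx : x = 0 := by
      have h5 : (2*(m:ℤ)) * x = 0 := by linarith [hx']
      rcases mul_eq_zero.mp h5 with h | h
      · linarith
      · exact h
    exact hxyz ⟨hx, hy, rfl⟩
  obtain ⟨u, v, w, huvw⟩ := ternary_rep (2*(m:ℤ)) (p:ℤ) γ 0 1 b hDt hpos
  exact ⟨u, v, w, huvw⟩

lemma coprime_of_modeq {a b n : ℕ} (h : a ≡ b [MOD n]) (hc : Nat.Coprime n b) :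
    Nat.Coprime n a := by
  unfold Nat.Coprime at *
  rw [Nat.gcd_rec n a, show a % n = b % n from h, ← Nat.gcd_rec n b]
  exact hc

lemma get_prime (m t8 : ℕ) (hm1 : 1 ≤ m) (ht8odd : t8 % 2 = 1)
    (hcop8t : Nat.Coprime 8 t8) (hcop2m : Nat.Coprime 2 m)
    (hcop8m : Nat.Coprime 8 m) (hcopm : Nat.Coprime m (m-1)) :
    ∃ p : ℕ, p.Prime ∧ p % 8 = t8 % 8 ∧ (2*m) ∣ (p+1) := by
  obtain ⟨A, hA8, hAm⟩ := Nat.chineseRemainder hcop8m t8 (m-1)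
  haveI : NeZero (8*m) := ⟨by omega⟩
  have hAunit : IsUnit ((A : ℕ) : ZMod (8*m)) := by
    rw [ZMod.isUnit_iff_coprime]
    exact Nat.Coprime.mul_right (coprime_of_modeq hA8 hcop8t).symm
      (coprime_of_modeq hAm hcopm).symm
  obtain ⟨p, hpgt, hpp, hpmod⟩ := Nat.forall_exists_prime_gt_and_eq_mod hAunit 0
  have hmodeq : p ≡ (A : ℕ) [MOD 8*m] := (ZMod.natCast_eq_natCast_iff p A (8*m)).mp hpmod
  have hp8 : p ≡ t8 [MOD 8] := (hmodeq.of_dvd ⟨m, rfl⟩).trans hA8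
  have hpm : p ≡ (m-1) [MOD m] := (hmodeq.of_dvd ⟨8, by ring⟩).trans hAm
  have hp8' : p % 8 = t8 % 8 := hp8
  have h2 : 2 ∣ p + 1 := by omega
  have hm' : m ∣ p + 1 := by
    have h3 : p + 1 ≡ (m-1) + 1 [MOD m] := hpm.add_right 1
    have h4 : (m-1) + 1 = m := by omega
    rw [h4] at h3
    have h6 : m ≡ 0 [MOD m] := Nat.modEq_zero_iff_dvd.mpr dvd_rfl
    exact Nat.modEq_zero_iff_dvd.mp (h3.trans h6)
  exact ⟨p, hpp, hp8', Nat.Coprime.mul_dvd_of_dvd_of_dvd hcop2m h2 hm'⟩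

/-- Twice an odd number is a sum of three squares. -/
lemma three_squares_two_mod_four (m : ℕ) (hodd : m % 2 = 1) :
    ∃ u v w : ℤ, (2*(m:ℤ)) = u^2 + v^2 + w^2 := by
  have hm1 : 1 ≤ m := by omega
  have hcop2m : Nat.Coprime 2 m := Nat.coprime_two_left.mpr (Nat.odd_iff.mpr hodd)
  have hcop8m : Nat.Coprime 8 m := by
    have h8 : (8:ℕ) = 2^3 := by norm_num
    rw [h8]
    exact Nat.Coprime.pow_left 3 hcop2m
  have hcopm : Nat.Coprime m (m-1) := by
    obtain ⟨m', rfl⟩ : ∃ m', m = m' + 1 := ⟨m-1, by omega⟩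
    simpa using (Nat.coprime_succ_self_left (n := m'))
  have hmdvd : ∀ p : ℕ, (2*m) ∣ (p+1) → (m:ℤ) ∣ ((p:ℤ) + 1) := by
    intro p h
    have : m ∣ p + 1 := dvd_trans (dvd_mul_left m 2) h
    exact_mod_cast Int.natCast_dvd_natCast.mpr this
  rcases (by omega : m % 4 = 1 ∨ m % 4 = 3) with hm4 | hm4
  · obtain ⟨p, hpp, hp8, hdvd⟩ := get_prime m 1 hm1 (by norm_num) (by norm_num)
      hcop2m hcop8m hcopm
    haveI : Fact p.Prime := ⟨hpp⟩
    have hp8' : p % 8 = 1 := by omega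
    have hoddp : Odd p := Nat.odd_iff.mpr (by omega)
    apply construct m p hm1 hpp hdvd
    apply ZMod.isSquare_of_jacobiSym_eq_one
    have e0 : (-(2*(m:ℤ))) = (-1) * ((2:ℤ) * (m:ℤ)) := by ring
    rw [e0, jacobiSym.mul_left, jacobiSym.mul_left, jacobiSym.at_neg_one hoddp,
      jacobiSym.at_two hoddp]
    have hχ4 : ZMod.χ₄ p = 1 := ZMod.χ₄_nat_one_mod_four (by omega)
    have hχ8 : ZMod.χ₈ p = 1 := by
      rw [ZMod.χ₈_nat_eq_if_mod_eight, if_neg (by omega), if_pos (by omega)]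
    have hrec : jacobiSym ((m:ℤ)) p = jacobiSym ((p:ℤ)) m :=
      jacobiSym.quadratic_reciprocity_one_mod_four hm4 hoddp
    have hpm' : jacobiSym ((p:ℤ)) m = jacobiSym (-1) m := by
      apply jacobiSym.mod_left'
      obtain ⟨t, ht⟩ := hmdvd p hdvd
      have hpt : (p:ℤ) = (-1) + (m:ℤ)*t := by linarith [ht]
      rw [hpt, Int.add_mul_emod_self_left]
    have hχ4m : jacobiSym (-1) m = 1 := by
      rw [jacobiSym.at_neg_one (Nat.odd_iff.mpr hodd)]
      exact ZMod.χ₄_nat_one_mod_four hm4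
    rw [hχ4, hχ8, hrec, hpm', hχ4m]
    ring
  · obtain ⟨p, hpp, hp8, hdvd⟩ := get_prime m 3 hm1 (by norm_num) (by norm_num)
      hcop2m hcop8m hcopm
    haveI : Fact p.Prime := ⟨hpp⟩
    have hp8' : p % 8 = 3 := by omega
    have hoddp : Odd p := Nat.odd_iff.mpr (by omega)
    apply construct m p hm1 hpp hdvd
    apply ZMod.isSquare_of_jacobiSym_eq_one
    have e0 : (-(2*(m:ℤ))) = (-1) * ((2:ℤ) * (m:ℤ)) := by ring
    rw [e0, jacobiSym.mul_left, jacobiSym.mul_left, jacobiSym.at_neg_one hoddp,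
      jacobiSym.at_two hoddp]
    have hχ4 : ZMod.χ₄ p = -1 := ZMod.χ₄_nat_three_mod_four (by omega)
    have hχ8 : ZMod.χ₈ p = -1 := by
      rw [ZMod.χ₈_nat_eq_if_mod_eight, if_neg (by omega), if_neg (by omega)]
    have hrec : jacobiSym ((m:ℤ)) p = -jacobiSym ((p:ℤ)) m :=
      jacobiSym.quadratic_reciprocity_three_mod_four hm4 (by omega)
    have hpm' : jacobiSym ((p:ℤ)) m = jacobiSym (-1) m := by
      apply jacobiSym.mod_left'
      obtain ⟨t, ht⟩ := hmdvd p hdvd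
      have hpt : (p:ℤ) = (-1) + (m:ℤ)*t := by linarith [ht]
      rw [hpt, Int.add_mul_emod_self_left]
    have hχ4m : jacobiSym (-1) m = -1 := by
      rw [jacobiSym.at_neg_one (Nat.odd_iff.mpr hodd)]
      exact ZMod.χ₄_nat_three_mod_four hm4
    rw [hχ4, hχ8, hrec, hpm', hχ4m]
    ring

lemma T2 (x : ℕ) : 2 * T x = x * (x+1) :=
  Nat.mul_div_cancel' (Nat.even_mul_succ_self x).two_dvd

lemma odd_sq_T (j : ℤ) : ∃ x : ℕ, (2*j+1)^2 = 8*((T x : ℕ) : ℤ) + 1 := by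
  have key : ∀ x : ℕ, ((x:ℤ))*((x:ℤ)+1) = j*(j+1) → (2*j+1)^2 = 8*((T x : ℕ) : ℤ) + 1 := by
    intro x hx
    have h2 := congrArg (Nat.cast : ℕ → ℤ) (T2 x)
    push_cast at h2
    linear_combination -4*hx - 4*h2
  rcases le_or_gt 0 j with h | h
  · exact ⟨j.toNat, key _ (by rw [Int.toNat_of_nonneg h])⟩
  · refine ⟨(-j-1).toNat, key _ ?_⟩
    have h1 : ((-j-1).toNat : ℤ) = -j-1 := Int.toNat_of_nonneg (by omega)
    rw [h1]; ring

lemma tri_helper (n : ℕ) (a b c : ℤ)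
    (h : 4*(n:ℤ)+2 = (2*a+1)^2 + (2*b+1)^2 + (c+c)^2) :
    ∃ x y z : ℕ, n = T x + T y + 2 * T z := by
  obtain ⟨x, hx⟩ := odd_sq_T (a+c)
  obtain ⟨y, hy⟩ := odd_sq_T (a-c)
  obtain ⟨z, hz⟩ := odd_sq_T b
  have h8 : 8*(n:ℤ)+4 = (2*(a+c)+1)^2 + (2*(a-c)+1)^2 + 2*(2*b+1)^2 := by
    linear_combination 2*h
  rw [hx, hy, hz] at h8
  have hfin : (n:ℤ) = ((T x : ℕ):ℤ) + ((T y : ℕ):ℤ) + 2*((T z : ℕ):ℤ) := by linarith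
  exact ⟨x, y, z, by exact_mod_cast hfin⟩

theorem liouville_1_1_2 (n : ℕ) : ∃ x y z : ℕ, n = T x + T y + 2 * T z := by
  obtain ⟨u, v, w, h⟩ := three_squares_two_mod_four (2*n+1) (by omega)
  have h' : 4*(n:ℤ)+2 = u^2+v^2+w^2 := by push_cast at h; linarith
  rcases Int.even_or_odd u with ⟨a, ha⟩ | ⟨a, ha⟩ <;>
    rcases Int.even_or_odd v with ⟨b, hb⟩ | ⟨b, hb⟩ <;>
      rcases Int.even_or_odd w with ⟨c, hc⟩ | ⟨c, hc⟩ <;>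
        subst ha hb hc
  · obtain ⟨s, hs⟩ : ∃ s:ℤ, s = a^2+b^2+c^2 := ⟨_, rfl⟩
    have hcon : 4*(n:ℤ)+2 = 4*s := by rw [hs]; linear_combination h'
    omega
  · obtain ⟨s, hs⟩ : ∃ s:ℤ, s = a^2+b^2+c^2+c := ⟨_, rfl⟩
    have hcon : 4*(n:ℤ)+2 = 4*s+1 := by rw [hs]; linear_combination h'
    omega
  · obtain ⟨s, hs⟩ : ∃ s:ℤ, s = a^2+b^2+b+c^2 := ⟨_, rfl⟩
    have hcon : 4*(n:ℤ)+2 = 4*s+1 := by rw [hs]; linear_combination h'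
    omega
  · exact tri_helper n b c a (by linear_combination h')
  · obtain ⟨s, hs⟩ : ∃ s:ℤ, s = a^2+a+b^2+c^2 := ⟨_, rfl⟩
    have hcon : 4*(n:ℤ)+2 = 4*s+1 := by rw [hs]; linear_combination h'
    omega
  · exact tri_helper n a c b (by linear_combination h')
  · exact tri_helper n a b c (by linear_combination h')
  · obtain ⟨s, hs⟩ : ∃ s:ℤ, s = a^2+a+b^2+b+c^2+c := ⟨_, rfl⟩
    have hcon : 4*(n:ℤ)+2 = 4*s+3 := by rw [hs]; linear_combination h'
    omega
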